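/- The formula ⟨p⟩Kv c ∧ ⟨q⟩Kv c → ⟨p∨q⟩Kv c is valid over S5 first-order epistemic models with constant domain, where Kv c means all epistemically accessible worlds assign the same value to c, and ⟨φ⟩ is public announcement. -/
import Mathlib

/-- Kv c holds at s relative to relation `rel`: all accessible worlds
assign the same value to c. -/
def kv {S C D : Type*} (rel : S → S → Prop) (VC : C → S → D) (c : C) (s : S) : Prop :=
  ∀ t1 t2, rel s t1 → rel s t2 → VC c t1 = VC c t2

/-- ⟨p⟩Kv c ∧ ⟨q⟩Kv c → ⟨p∨q⟩Kv c is valid over S5 FO epistemic models with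
constant domain; announcing φ restricts the relation to φ-worlds. -/
theorem ann_kv_or {S C D : Type*} (rel : S → S → Prop)
    (hequiv : Equivalence rel) (VC : C → S → D) (p q : S → Prop) (c : C) (s : S)
    (hp : p s ∧ kv (fun a b => rel a b ∧ p a ∧ p b) VC c s)
    (hq : q s ∧ kv (fun a b => rel a b ∧ q a ∧ q b) VC c s) :
    (p s ∨ q s) ∧
      kv (fun a b => rel a b ∧ (p a ∨ q a) ∧ (p b ∨ q b)) VC c s := by
  refine ⟨Or.inl hp.1, ?_⟩
  have key : ∀ t, rel s t → (p t ∨ q t) → VC c t = VC c s := by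
    intro t hst ht
    rcases ht with h | h
    · exact hp.2 t s ⟨hst, hp.1, h⟩ ⟨hequiv.refl s, hp.1, hp.1⟩
    · exact hq.2 t s ⟨hst, hq.1, h⟩ ⟨hequiv.refl s, hq.1, hq.1⟩
  intro t1 t2 h1 h2
  rw [key t1 h1.1 h1.2.2, key t2 h2.1 h2.2.2]
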